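/- arXiv:2303.03900 — 2 statements merged into one kernel-verified Lean document; each statement's English description precedes it below -/
import Mathlib

section
/- Let L : ℝ → ℝ be convex and differentiable with derivative L', M-smooth in the sense that |L'(s₁) − L'(s₂)| ≤ M |s₁ − s₂| for all s₁, s₂ ∈ ℝ, and with quadratic growth rate G = inf{g ≥ 0 : sup_{s∈ℝ} L(s) − g s² < ∞}. Fix θ, ẑ ∈ ℝ^d and λ ≥ 0, and consider the problem sup_{γ ∈ ℝ} φ(γ), where φ(γ) = L(⟨θ, ẑ⟩ + γ ‖θ‖_*) − λ γ². Then: (i) if λ < G ‖θ‖_*², the supremum equals +∞; (ii) if λ > G ‖θ‖_*², the supremum is finite and attained, and every maximizer γ* satisfies |γ*| ≥ (‖θ‖_* / (2λ)) |L'(⟨θ, ẑ⟩)|; (iii) if λ > M ‖θ‖_*² / 2, then φ is concave and has a unique maximizer. -/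
open Set

noncomputable section

/-- The inner product `⟨x, y⟩ = Σ_i x_i y_i` on `ℝ^d`. -/
def dotp {d : ℕ} (x y : Fin d → ℝ) : ℝ := ∑ i, x i * y i

/-- The dual norm `‖θ‖_* = sup {⟨θ, x⟩ : ‖x‖ ≤ 1}` of a norm `N` on `ℝ^d`. -/
def dualNorm {d : ℕ} (N : (Fin d → ℝ) → ℝ) (θ : Fin d → ℝ) : ℝ :=
  sSup {r : ℝ | ∃ x : Fin d → ℝ, N x ≤ 1 ∧ r = dotp θ x}

set_option maxHeartbeats 1600000 in
/-- **Convexity and solvability of the scalarized `c`-transform problem.**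
For a convex, differentiable, `M`-smooth loss `L` with quadratic growth rate `G`, the
problem `sup_γ φ(γ)` with `φ(γ) = L(⟨θ, ẑ⟩ + γ‖θ‖_*) − λγ²` is (i) unbounded if
`λ < G‖θ‖_*²`; (ii) solvable if `λ > G‖θ‖_*²`, with every maximizer `γ*` satisfying
`|γ*| ≥ (‖θ‖_*/(2λ))|L'(⟨θ, ẑ⟩)|`; and (iii) concave with a unique maximizer if
`λ > M‖θ‖_*²/2`. -/
theorem scalarized_c_transform_properties {d : ℕ}
    (N : (Fin d → ℝ) → ℝ)
    (hN0 : ∀ x, N x = 0 ↔ x = 0)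
    (hNhom : ∀ (a : ℝ) x, N (a • x) = |a| * N x)
    (hNtri : ∀ x y, N (x + y) ≤ N x + N y)
    (L L' : ℝ → ℝ)
    (hLconv : ConvexOn ℝ Set.univ L)
    (hLderiv : ∀ s, HasDerivAt L (L' s) s)
    (M : ℝ) (hM : ∀ s t : ℝ, |L' s - L' t| ≤ M * |s - t|)
    (G : ℝ)
    (hG : G = sInf {g : ℝ | 0 ≤ g ∧ BddAbove (Set.range fun s => L s - g * s ^ 2)})
    (θ zhat : Fin d → ℝ) (lam : ℝ) (hlam : 0 ≤ lam) :
    -- (i) unboundedness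
    (lam < G * dualNorm N θ ^ 2 →
      (⨆ γ : ℝ, ((L (dotp θ zhat + γ * dualNorm N θ) - lam * γ ^ 2 : ℝ) : EReal)) = ⊤) ∧
    -- (ii) solvability and lower bound on the maximizers
    (G * dualNorm N θ ^ 2 < lam →
      (∃ γs : ℝ, ∀ γ : ℝ,
        L (dotp θ zhat + γ * dualNorm N θ) - lam * γ ^ 2 ≤
          L (dotp θ zhat + γs * dualNorm N θ) - lam * γs ^ 2) ∧
      (∀ γs : ℝ, (∀ γ : ℝ,
        L (dotp θ zhat + γ * dualNorm N θ) - lam * γ ^ 2 ≤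
          L (dotp θ zhat + γs * dualNorm N θ) - lam * γs ^ 2) →
        dualNorm N θ / (2 * lam) * |L' (dotp θ zhat)| ≤ |γs|)) ∧
    -- (iii) concavity and uniqueness of the maximizer
    (M * dualNorm N θ ^ 2 / 2 < lam →
      ConcaveOn ℝ Set.univ
        (fun γ : ℝ => L (dotp θ zhat + γ * dualNorm N θ) - lam * γ ^ 2) ∧
      (∃! γs : ℝ, ∀ γ : ℝ,
        L (dotp θ zhat + γ * dualNorm N θ) - lam * γ ^ 2 ≤
          L (dotp θ zhat + γs * dualNorm N θ) - lam * γs ^ 2)) := by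
    classical
  set n : ℝ := dualNorm N θ with hn
  set a : ℝ := dotp θ zhat with ha
  set φ : ℝ → ℝ := fun γ => L (a + γ * n) - lam * γ ^ 2 with hφ
  set S : Set ℝ := {g : ℝ | 0 ≤ g ∧ BddAbove (Set.range fun s => L s - g * s ^ 2)} with hSdef
  have hM0 : 0 ≤ M := le_trans (abs_nonneg (L' 1 - L' 0)) (by simpa using hM 1 0)
  have hG0 : 0 ≤ G := hG ▸ Real.sInf_nonneg (fun g hg => hg.1)
  have hSbdd : BddBelow S := ⟨0, fun g hg => hg.1⟩
  -- gradient inequality for the convex function L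
  have hgrad : ∀ x y : ℝ, L x + L' x * (y - x) ≤ L y := by
    intro x y
    rcases lt_trichotomy x y with h | h | h
    · have h1 := hLconv.le_slope_of_hasDerivAt (mem_univ x) (mem_univ y) h (hLderiv x)
      rw [slope_def_field] at h1
      have h2 := (le_div_iff₀ (by linarith)).mp h1
      linarith
    · simp [h]
    · have h1 := hLconv.slope_le_of_hasDerivAt (mem_univ y) (mem_univ x) h (hLderiv x)
      rw [slope_def_field] at h1
      have h2 := (div_le_iff₀ (by linarith)).mp h1
      linarith
  -- quadratic upper bound from M-smoothness
  have hquad : ∀ s : ℝ, L s ≤ L 0 + L' 0 * s + M / 2 * s ^ 2 := by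
    intro s
    set h : ℝ → ℝ := fun t => L (t * s) - t * (L' 0 * s) - t ^ 2 * (M / 2 * s ^ 2) with hh
    have hd : ∀ t : ℝ, HasDerivAt h
        (L' (t * s) * s - L' 0 * s - (2 : ℕ) * t ^ (1 : ℕ) * (M / 2 * s ^ 2)) t := by
      intro t
      exact ((HasDerivAt.comp t (hLderiv (t * s)) (hasDerivAt_mul_const s)).sub
        (by simpa using (hasDerivAt_mul_const (L' 0 * s)))).sub
        ((hasDerivAt_pow 2 t).mul_const (M / 2 * s ^ 2))
    have hanti : AntitoneOn h (Set.Ici (0 : ℝ)) := by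
      apply antitoneOn_of_deriv_nonpos (convex_Ici 0)
      · exact fun t _ => ((hd t).continuousAt).continuousWithinAt
      · exact fun t _ => ((hd t).differentiableAt).differentiableWithinAt
      · intro t ht
        rw [interior_Ici] at ht
        rw [(hd t).deriv]
        have h1 : (L' (t * s) - L' 0) * s ≤ |L' (t * s) - L' 0| * |s| := by
          calc (L' (t * s) - L' 0) * s ≤ |(L' (t * s) - L' 0) * s| := le_abs_self _
          _ = |L' (t * s) - L' 0| * |s| := abs_mul _ _
        have h2 : |L' (t * s) - L' 0| ≤ M * |t * s - 0| := hM (t * s) 0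
        have h3 : |t * s - 0| = t * |s| := by
          rw [sub_zero, abs_mul, abs_of_pos ht]
        have h4 : |L' (t * s) - L' 0| * |s| ≤ M * (t * |s|) * |s| := by
          apply mul_le_mul_of_nonneg_right _ (abs_nonneg s)
          rw [← h3]; exact h2
        have h5 : |s| * |s| = s ^ 2 := by rw [← abs_mul, abs_mul_self, sq]
        have h6 : M * (t * |s|) * |s| = M * t * s ^ 2 := by
          rw [show M * (t * |s|) * |s| = M * t * (|s| * |s|) by ring, h5]
        push_cast
        rw [pow_one]
        linarith [h1, h4, h6]
    have h10 : h 1 ≤ h 0 := hanti (Set.self_mem_Ici) (by norm_num : (1 : ℝ) ∈ Set.Ici (0:ℝ)) zero_le_one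
    simp only [hh] at h10
    norm_num at h10
    linarith [h10]
  -- membership in S
  have hSmem : ∀ ε : ℝ, 0 < ε → M / 2 + ε ∈ S := by
    intro ε hε
    refine ⟨by linarith, ⟨L 0 + (L' 0) ^ 2 / (4 * ε), ?_⟩⟩
    rintro _ ⟨s, rfl⟩
    have h1 := hquad s
    have h2 : 0 ≤ (2 * ε * s - L' 0) ^ 2 := sq_nonneg _
    have h3 : 0 ≤ ε * s ^ 2 - L' 0 * s + (L' 0) ^ 2 / (4 * ε) := by
      have key : ε * s ^ 2 - L' 0 * s + (L' 0) ^ 2 / (4 * ε) = (2 * ε * s - L' 0) ^ 2 / (4 * ε) := by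
        field_simp
        ring
      rw [key]
      positivity
    linarith [h1, h3]
  have hSne : S.Nonempty := ⟨M / 2 + 1, hSmem 1 one_pos⟩
  -- derivative of φ
  have hφd : ∀ γ : ℝ, HasDerivAt φ (L' (a + γ * n) * n - 2 * lam * γ) γ := by
    intro γ
    have h1 : HasDerivAt (fun γ : ℝ => a + γ * n) n γ := by
      simpa using (hasDerivAt_mul_const n).const_add a
    have h2 : HasDerivAt (fun γ : ℝ => L (a + γ * n)) (L' (a + γ * n) * n) γ :=
      HasDerivAt.comp γ (hLderiv (a + γ * n)) h1
    have h3 : HasDerivAt (fun γ : ℝ => lam * γ ^ 2) (2 * lam * γ) γ := by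
      have := (hasDerivAt_pow 2 γ).const_mul lam
      refine this.congr_deriv ?_
      push_cast
      ring
    exact h2.sub h3
  have hLc : Continuous L := continuous_iff_continuousAt.mpr fun s => (hLderiv s).continuousAt
  have hφc : Continuous φ := by
    apply Continuous.sub
    · exact hLc.comp (by continuity)
    · continuity
  -- shared existence of a maximizer
  have hexists : G * n ^ 2 < lam → ∃ γs : ℝ, ∀ γ : ℝ, φ γ ≤ φ γs := by
    intro hlt
    have hlam0 : 0 < lam := lt_of_le_of_lt (by positivity) hlt
    obtain ⟨g', hg'S, hg'n⟩ : ∃ g' ∈ S, g' * n ^ 2 < lam := by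
      by_cases hn0 : n = 0
      · exact ⟨M / 2 + 1, hSmem 1 one_pos, by rw [hn0]; simpa using hlam0⟩
      · have hn2 : 0 < n ^ 2 := by positivity
        have : G < lam / n ^ 2 := (lt_div_iff₀ hn2).mpr hlt
        obtain ⟨g', hg'S, hg'⟩ := exists_lt_of_csInf_lt hSne (hG ▸ this)
        exact ⟨g', hg'S, (lt_div_iff₀ hn2).mp hg'⟩
    obtain ⟨C, hC⟩ := hg'S.2
    have hC' : ∀ s : ℝ, L s - g' * s ^ 2 ≤ C := fun s => hC (Set.mem_range_self s)
    have hκ0 : 0 < lam - g' * n ^ 2 := by linarith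
    set P : ℝ := |2 * g' * a * n| + |C + g' * a ^ 2| + |L a| + 1 with hP
    set R : ℝ := max 1 (P / (lam - g' * n ^ 2)) with hR
    have hR1 : (1 : ℝ) ≤ R := le_max_left _ _
    have hfar : ∀ γ : ℝ, R < |γ| → φ γ < φ 0 := by
      intro γ hγ
      have h0 : φ 0 = L a := by simp [hφ]
      have h1 : L (a + γ * n) - g' * (a + γ * n) ^ 2 ≤ C := hC' (a + γ * n)
      have h2 : P ≤ (lam - g' * n ^ 2) * |γ| := by
        have hPR : P / (lam - g' * n ^ 2) ≤ |γ| := le_trans (le_max_right _ _) hγ.le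
        calc P = (lam - g' * n ^ 2) * (P / (lam - g' * n ^ 2)) := by field_simp
        _ ≤ (lam - g' * n ^ 2) * |γ| := mul_le_mul_of_nonneg_left hPR hκ0.le
      have h3 : 1 < |γ| := lt_of_le_of_lt hR1 hγ
      have e1 : P * |γ| ≤ (lam - g' * n ^ 2) * γ ^ 2 := by
        have := mul_le_mul_of_nonneg_right h2 (abs_nonneg γ)
        calc P * |γ| ≤ (lam - g' * n ^ 2) * |γ| * |γ| := this
        _ = (lam - g' * n ^ 2) * γ ^ 2 := by rw [mul_assoc, ← sq, sq_abs]
      rw [hP] at e1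
      have e2 : (|C + g' * a ^ 2| + |L a| + 1) * 1 ≤ (|C + g' * a ^ 2| + |L a| + 1) * |γ| :=
        mul_le_mul_of_nonneg_left h3.le (by positivity)
      have h5 : 2 * g' * a * n * γ ≤ |2 * g' * a * n| * |γ| := by
        calc 2 * g' * a * n * γ ≤ |2 * g' * a * n * γ| := le_abs_self _
        _ = |2 * g' * a * n| * |γ| := abs_mul _ _
      have h6 : -|L a| ≤ L a := neg_abs_le _
      have h7 : C + g' * a ^ 2 ≤ |C + g' * a ^ 2| := le_abs_self _
      rw [h0]
      simp only [hφ]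
      linarith [h1, e1, e2, h5, h6, h7]
    have hRpos : 0 < R := lt_of_lt_of_le zero_lt_one hR1
    obtain ⟨γs, hγsmem, hγsmax⟩ := isCompact_Icc.exists_isMaxOn
      (Set.nonempty_Icc.mpr (by linarith : -R ≤ R)) (hφc.continuousOn)
    refine ⟨γs, fun γ => ?_⟩
    by_cases hγ : |γ| ≤ R
    · exact hγsmax (by rw [Set.mem_Icc, ← abs_le]; exact hγ)
    · have := hfar γ (not_le.mp hγ)
      have h0 : φ 0 ≤ φ γs := hγsmax (by rw [Set.mem_Icc]; constructor <;> linarith)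
      linarith
  refine ⟨?_, ?_, ?_⟩
  · -- (i) unboundedness
    intro hlt
    have hn2 : 0 < n ^ 2 := by
      rcases eq_or_lt_of_le (sq_nonneg n) with h | h
      · exfalso; rw [← h, mul_zero] at hlt; linarith
      · exact h
    set g : ℝ := lam / n ^ 2 with hg
    have hgG : g < G := (div_lt_iff₀ hn2).mpr hlt
    have hg0 : 0 ≤ g := div_nonneg hlam hn2.le
    clear_value g
    have h1 : g < (g + G) / 2 := by linarith
    have h2 : (g + G) / 2 < G := by linarith
    have hnb : ¬ BddAbove (Set.range fun s => L s - (g + G) / 2 * s ^ 2) := by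
      intro hb
      have hmem : (g + G) / 2 ∈ S := ⟨by linarith, hb⟩
      have h9 : sInf S ≤ (g + G) / 2 := csInf_le hSbdd hmem
      rw [← hG] at h9
      linarith
    rw [iSup_eq_top]
    intro b hb
    obtain ⟨x, hbx, -⟩ := EReal.exists_between_coe_real hb
    obtain ⟨y, ⟨s, rfl⟩, hy⟩ := not_bddAbove_iff.mp hnb
      (x + (g * a) ^ 2 / ((g + G) / 2 - g) + g * a ^ 2)
    have hn0 : n ≠ 0 := fun h => by rw [h] at hn2; simp at hn2
    refine ⟨(s - a) / n, ?_⟩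
    have hγn : a + (s - a) / n * n = s := by field_simp; ring
    have key : lam * ((s - a) / n) ^ 2 = g * (s - a) ^ 2 := by
      rw [hg]; field_simp
    have t0 : 0 < (g + G) / 2 - g := by linarith
    have pos : 0 ≤ ((g + G) / 2 - g) * s ^ 2 + 2 * g * a * s + (g * a) ^ 2 / ((g + G) / 2 - g) := by
      have e : (g * a) ^ 2 / ((g + G) / 2 - g) * ((g + G) / 2 - g) = (g * a) ^ 2 :=
        div_mul_cancel₀ _ (ne_of_gt t0)
      nlinarith [sq_nonneg (((g + G) / 2 - g) * s + g * a), t0, e]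
    have expand : g * (s - a) ^ 2 = g * s ^ 2 - 2 * g * a * s + g * a ^ 2 := by ring
    have hx2 : x < L (a + (s - a) / n * n) - lam * ((s - a) / n) ^ 2 := by
      rw [hγn, key]
      linarith [hy, pos, expand]
    calc b < (x : EReal) := hbx
    _ < ((L (a + (s - a) / n * n) - lam * ((s - a) / n) ^ 2 : ℝ) : EReal) := by
      exact_mod_cast hx2
  · -- (ii)
    intro hlt
    have hlam0 : 0 < lam := lt_of_le_of_lt (by positivity) hlt
    obtain ⟨γs0, hγs0⟩ := hexists hlt
    refine ⟨⟨γs0, fun γ => hγs0 γ⟩, ?_⟩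
    intro γs hmax
    have hloc : IsLocalMax φ γs := Filter.Eventually.of_forall fun γ => hmax γ
    have hcrit : L' (a + γs * n) * n - 2 * lam * γs = 0 := hloc.hasDerivAt_eq_zero (hφd γs)
    set γ0 : ℝ := n * L' a / (2 * lam) with hγ0
    have hA : φ γ0 ≤ φ γs := hmax γ0
    have hB := hgrad a (a + γ0 * n)
    have hC2 := hgrad (a + γs * n) a
    have hγ0' : 2 * lam * γ0 = n * L' a := by rw [hγ0]; field_simp
    have hγ0'' : L' a * γ0 * n = 2 * lam * γ0 ^ 2 := by
      calc L' a * γ0 * n = (n * L' a) * γ0 := by ring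
      _ = (2 * lam * γ0) * γ0 := by rw [hγ0']
      _ = 2 * lam * γ0 ^ 2 := by ring
    have hcrit' : L' (a + γs * n) * n = 2 * lam * γs := by linarith [hcrit]
    have hcrit2 : L' (a + γs * n) * (a - (a + γs * n)) = -(2 * lam * γs) * γs := by
      calc L' (a + γs * n) * (a - (a + γs * n)) = -(L' (a + γs * n) * n) * γs := by ring
      _ = -(2 * lam * γs) * γs := by rw [hcrit']
    have hAφ : L (a + γ0 * n) - lam * γ0 ^ 2 ≤ L (a + γs * n) - lam * γs ^ 2 := hA
    have hsq : lam * γ0 ^ 2 ≤ lam * γs ^ 2 := by linarith [hAφ, hB, hC2, hγ0'', hcrit2]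
    have hsq2 : γ0 ^ 2 ≤ γs ^ 2 := le_of_mul_le_mul_left hsq hlam0
    have habs : |γ0| ≤ |γs| := by
      rw [← Real.sqrt_sq_eq_abs, ← Real.sqrt_sq_eq_abs]
      exact Real.sqrt_le_sqrt hsq2
    have hval : |γ0| = |n| * |L' a| / (2 * lam) := by
      rw [hγ0, abs_div, abs_mul, abs_of_pos (by linarith : (0:ℝ) < 2 * lam)]
    calc n / (2 * lam) * |L' a| ≤ |n| / (2 * lam) * |L' a| := by
          gcongr
          exact le_abs_self n
    _ = |γ0| := by rw [hval]; ring
    _ ≤ |γs| := habs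
  · -- (iii)
    intro hlt
    have hconc : StrictConcaveOn ℝ univ φ := by
      apply StrictAnti.strictConcaveOn_univ_of_deriv hφc
      have hder : deriv φ = fun γ => L' (a + γ * n) * n - 2 * lam * γ :=
        funext fun γ => (hφd γ).deriv
      rw [hder]
      intro x y hxy
      have h2 := hM (a + y * n) (a + x * n)
      have h3 : |a + y * n - (a + x * n)| = (y - x) * |n| := by
        rw [show a + y * n - (a + x * n) = (y - x) * n by ring, abs_mul,
          abs_of_pos (by linarith : (0:ℝ) < y - x)]
      rw [h3] at h2
      have h4 : (L' (a + y * n) - L' (a + x * n)) * n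
          ≤ |L' (a + y * n) - L' (a + x * n)| * |n| := by
        calc (L' (a + y * n) - L' (a + x * n)) * n
            ≤ |(L' (a + y * n) - L' (a + x * n)) * n| := le_abs_self _
        _ = |L' (a + y * n) - L' (a + x * n)| * |n| := abs_mul _ _
      have h5 : |L' (a + y * n) - L' (a + x * n)| * |n| ≤ M * ((y - x) * |n|) * |n| :=
        mul_le_mul_of_nonneg_right h2 (abs_nonneg n)
      have h6 : M * ((y - x) * |n|) * |n| = M * (y - x) * n ^ 2 := by
        rw [show M * ((y - x) * |n|) * |n| = M * (y - x) * (|n| * |n|) by ring,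
          ← abs_mul, abs_mul_self, sq]
      have h7 : M * (y - x) * n ^ 2 < 2 * lam * (y - x) := by
        have := mul_lt_mul_of_pos_right (show M * n ^ 2 < 2 * lam by linarith)
          (show (0:ℝ) < y - x by linarith)
        linarith [this]
      show L' (a + y * n) * n - 2 * lam * y < L' (a + x * n) * n - 2 * lam * x
      linarith [h4, h5, h6, h7]
    have hGn : G * n ^ 2 < lam := by
      by_cases hn0 : n = 0
      · have hlam0 : (0:ℝ) < lam := by rw [hn0] at hlt; simpa using hlt
        rw [hn0]; simpa using hlam0
      · have hn2 : 0 < n ^ 2 := by positivity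
        have hMd : M / 2 < lam / n ^ 2 := by
          rw [lt_div_iff₀ hn2]; linarith [hlt]
        have hε : 0 < (lam / n ^ 2 - M / 2) / 2 := by linarith
        have hle : G ≤ M / 2 + (lam / n ^ 2 - M / 2) / 2 :=
          hG ▸ csInf_le hSbdd (hSmem _ hε)
        have hlt2 : M / 2 + (lam / n ^ 2 - M / 2) / 2 < lam / n ^ 2 := by linarith
        calc G * n ^ 2 ≤ (M / 2 + (lam / n ^ 2 - M / 2) / 2) * n ^ 2 :=
              mul_le_mul_of_nonneg_right hle hn2.le
        _ < lam := (lt_div_iff₀ hn2).mp hlt2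
    obtain ⟨γs, hγs⟩ := hexists hGn
    refine ⟨hconc.concaveOn, γs, fun γ => hγs γ, ?_⟩
    intro y hy
    exact hconc.eq_of_isMaxOn (fun γ _ => hy γ) (fun γ _ => hγs γ) (mem_univ y) (mem_univ γs)
end
end

section
/- Let θ ∈ ℝ^d with θ_i ≥ 0 for all i and Σ_{i∈[d]} θ_i = 1, let λ > 0, and let ẑ ∈ ℝ^d with ẑ_i > 0 for all i. Set u_i = θ_i ẑ_i for i ∈ [d], let σ be a permutation of [d] with u_{σ(1)} ≤ u_{σ(2)} ≤ ⋯ ≤ u_{σ(d)}, and define k = max{ i ∈ [d] : (1 − (d − i)λ) u_{σ(i)} ≤ λ Σ_{j∈[i]} u_{σ(j)} } and γ* = ((d − k)λ − 1) / Σ_{i∈[k]} u_{σ(i)}. Consider φ(γ) = 1 + log(−γ) + Σ_{i∈[d]} λ h(γ θ_i ẑ_i / λ) for γ < 0. If λ ≥ 1/‖θ‖₀, then γ* is a maximizer of φ over (−∞, 0); if 0 < λ < 1/‖θ‖₀, then sup_{γ < 0} φ(γ) = +∞. -/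
open Set

noncomputable section

/-- The auxiliary function `h(s) = −1 − log(−s)` for `s < −1`, `h(s) = s` for
`−1 ≤ s ≤ 0`, and `h(s) = +∞` for `s > 0`. -/
def auxH (s : ℝ) : EReal :=
  if 0 < s then ⊤
  else if s < -1 then ((-1 - Real.log (-s) : ℝ) : EReal)
  else ((s : ℝ) : EReal)

/-- The objective `φ(γ) = 1 + log(−γ) + Σ_i λ h(γ θ_i ẑ_i / λ)` of the `c`-transform
evaluation problem in distributionally robust log-optimal portfolio selection. -/
def portfolioObj {d : ℕ} (θ zhat : Fin d → ℝ) (lam : ℝ) (γ : ℝ) : EReal :=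
  ((1 + Real.log (-γ) : ℝ) : EReal) +
    ∑ i : Fin d, (lam : EReal) * auxH (γ * (θ i * zhat i) / lam)

def hr (s : ℝ) : ℝ := if s < -1 then -1 - Real.log (-s) else s

lemma auxH_of_nonpos {s : ℝ} (hs : s ≤ 0) : auxH s = ((hr s : ℝ) : EReal) := by
  unfold auxH hr
  rw [if_neg (not_lt.2 hs)]
  split_ifs <;> rfl

lemma realToEReal_sum {α : Type*} (s : Finset α) (f : α → ℝ) :
    ((∑ i ∈ s, f i : ℝ) : EReal) = ∑ i ∈ s, ((f i : ℝ) : EReal) :=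
  map_sum (⟨⟨Real.toEReal, by simp⟩, fun x y => by simp [EReal.coe_add]⟩ : ℝ →+ EReal) f s

lemma obj_eq {d : ℕ} (θ zhat : Fin d → ℝ) (lam : ℝ) (γ : ℝ) (hγ : γ ≤ 0)
    (hlam : 0 < lam) (hnn : ∀ i, 0 ≤ θ i * zhat i) :
    portfolioObj θ zhat lam γ =
      ((1 + Real.log (-γ) + ∑ i : Fin d, lam * hr (γ * (θ i * zhat i) / lam) : ℝ) : EReal) := by
  unfold portfolioObj
  have h1 : ∀ i : Fin d, (lam : EReal) * auxH (γ * (θ i * zhat i) / lam)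
      = ((lam * hr (γ * (θ i * zhat i) / lam) : ℝ) : EReal) := by
    intro i
    have hsle : γ * (θ i * zhat i) / lam ≤ 0 :=
      div_nonpos_iff.2 (Or.inr ⟨mul_nonpos_of_nonpos_of_nonneg hγ (hnn i), hlam.le⟩)
    rw [auxH_of_nonpos hsle, ← EReal.coe_mul]
  rw [Finset.sum_congr rfl (fun i _ => h1 i), ← realToEReal_sum, ← EReal.coe_add]

lemma hr_lin_eq {c lam γs : ℝ} (hlam : 0 < lam) (hreg : -lam ≤ γs * c) :
    lam * hr (γs * c / lam) = γs * c := by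
  unfold hr
  rw [if_neg (by rw [not_lt, le_div_iff₀ hlam]; linarith)]
  field_simp

lemma hr_log_eq {c lam γs : ℝ} (hlam : 0 < lam) (hγs : γs < 0) (hc : 0 < c)
    (hlt : γs * c < -lam) :
    lam * hr (γs * c / lam) = -lam * (1 + Real.log (c / lam)) - lam * Real.log (-γs) := by
  have hγs' : (0:ℝ) < -γs := by linarith
  unfold hr
  rw [if_pos (by rw [div_lt_iff₀ hlam]; linarith)]
  have h1 : -(γs * c / lam) = (-γs) * (c / lam) := by ring
  rw [h1, Real.log_mul (ne_of_gt hγs') (ne_of_gt (div_pos hc hlam))]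
  ring

lemma key_xlog {x : ℝ} (hx : 0 < x) : x - 1 ≤ x * Real.log x := by
  have h := Real.one_sub_inv_le_log_of_pos hx
  have h2 := mul_le_mul_of_nonneg_left h hx.le
  have h3 : x * (1 - x⁻¹) = x - 1 := by field_simp
  linarith [h2, h3.ge, h3.le]

/-- Tangent bound with slope `γs*c` (linear regime at `γs`). -/
lemma hr_le_lin {c lam γ γs : ℝ} (hc : 0 ≤ c) (hlam : 0 < lam) (hγ : γ < 0)
    (hγs : γs < 0) (hreg : -lam ≤ γs * c) :
    lam * hr (γ * c / lam) ≤ γs * c * (1 + Real.log (-γ) - Real.log (-γs)) := by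
  rcases hc.eq_or_lt with h0 | hc
  · simp [hr, ← h0, not_lt.2 (by norm_num : (-1:ℝ) ≤ 0)]
  have hγ' : (0:ℝ) < -γ := by linarith
  have hγs' : (0:ℝ) < -γs := by linarith
  by_cases hcase : γ * c / lam < -1
  · -- log regime at γ
    have hγc : γ * c < -lam := by rw [div_lt_iff₀ hlam] at hcase; linarith
    rw [hr_log_eq hlam hγ hc hγc]
    -- abbreviations
    have hx0 : 0 < -(γs * c) / lam := by
      apply div_pos _ hlam; nlinarith
    have hx1 : -(γs * c) / lam ≤ 1 := by rw [div_le_one hlam]; linarith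
    have hy : γs * c = -(lam * (-(γs * c) / lam)) := by field_simp
    have ha : Real.log (-γs) = Real.log (-(γs * c) / lam) - Real.log (c / lam) := by
      have h1 : -(γs * c) / lam = (-γs) * (c / lam) := by ring
      rw [h1, Real.log_mul (ne_of_gt hγs') (ne_of_gt (div_pos hc hlam))]
      ring
    have htL : 0 < Real.log (-γ) + Real.log (c / lam) := by
      have h2 : (1:ℝ) < (-γ) * (c / lam) := by
        rw [div_lt_iff₀ hlam] at hcase
        rw [show (-γ) * (c / lam) = -(γ * c) / lam by ring, lt_div_iff₀ hlam]; linarith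
      have h3 := Real.log_lt_log one_pos h2
      rwa [Real.log_one, Real.log_mul (ne_of_gt hγ') (ne_of_gt (div_pos hc hlam))] at h3
    rw [hy, ha]
    have hkey := key_xlog hx0
    nlinarith [mul_nonneg (mul_nonneg hlam.le (sub_nonneg.2 hx1)) htL.le,
      mul_nonneg hlam.le (by nlinarith : (0:ℝ) ≤ 1 - (-(γs * c) / lam)
        + (-(γs * c) / lam) * Real.log (-(γs * c) / lam))]
  · -- linear regime at γ
    unfold hr
    rw [if_neg hcase]
    push_neg at hcase
    have hval : lam * (γ * c / lam) = γ * c := by field_simp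
    rw [hval]
    have hr0 : 0 < (-γ) / (-γs) := div_pos hγ' hγs'
    have hlog : Real.log (-γ) - Real.log (-γs) = Real.log ((-γ) / (-γs)) :=
      (Real.log_div (ne_of_gt hγ') (ne_of_gt hγs')).symm
    have hle : Real.log ((-γ)/(-γs)) ≤ (-γ)/(-γs) - 1 := Real.log_le_sub_one_of_pos hr0
    have hγsc : γs * c < 0 := mul_neg_of_neg_of_pos hγs hc
    have hrr : γs * c * ((-γ)/(-γs)) = γ * c := by
      field_simp [ne_of_lt hγs]
    nlinarith [mul_le_mul_of_nonpos_left hle (le_of_lt hγsc)]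

/-- Tangent bound with slope `-lam` (log regime at `γs`); valid for all `γ<0`, `c>0`. -/
lemma hr_le_log {c lam γ : ℝ} (hc : 0 < c) (hlam : 0 < lam) (hγ : γ < 0) :
    lam * hr (γ * c / lam) ≤ -lam * (1 + Real.log (c / lam)) - lam * Real.log (-γ) := by
  have hγ' : (0:ℝ) < -γ := by linarith
  have hsplit : Real.log (-(γ * c / lam)) = Real.log (-γ) + Real.log (c / lam) := by
    have h2 : -(γ * c / lam) = (-γ) * (c / lam) := by ring
    rw [h2, Real.log_mul (ne_of_gt hγ') (ne_of_gt (div_pos hc hlam))]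
  unfold hr
  by_cases hcase : γ * c / lam < -1
  · rw [if_pos hcase, hsplit]
    have : lam * (-1 - (Real.log (-γ) + Real.log (c / lam)))
        = -lam * (1 + Real.log (c / lam)) - lam * Real.log (-γ) := by ring
    rw [this]
  · rw [if_neg hcase]
    push_neg at hcase
    have hx0 : 0 < -(γ * c / lam) := by
      have : γ * c / lam < 0 := div_neg_of_neg_of_pos (mul_neg_of_neg_of_pos hγ hc) hlam
      linarith
    have hx1 : -(γ * c / lam) ≤ 1 := by linarith
    have hlogx : Real.log (-(γ * c / lam)) ≤ -(γ * c / lam) - 1 :=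
      Real.log_le_sub_one_of_pos hx0
    have h4 : lam * (γ * c / lam) = -(lam * (-(γ * c / lam))) := by field_simp
    rw [h4]
    have h6 : lam * Real.log (-(γ * c / lam))
        = lam * Real.log (-γ) + lam * Real.log (c / lam) := by rw [hsplit]; ring
    nlinarith [mul_le_mul_of_nonneg_left hlogx hlam.le]

lemma card_filter_lt_fin {d k : ℕ} (hk : k ≤ d) :
    (Finset.univ.filter fun i : Fin d => (i : ℕ) < k).card = k := by
  rw [← Finset.card_range k]
  apply Finset.card_bij (fun (i : Fin d) _ => (i : ℕ))
  · intro a ha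
    simp only [Finset.mem_filter] at ha
    simpa using ha.2
  · intro a ha b hb hab
    exact Fin.ext hab
  · intro b hb
    simp only [Finset.mem_range] at hb
    exact ⟨⟨b, lt_of_lt_of_le hb hk⟩, by simp [hb], rfl⟩

lemma sum_filter_lt_succ {d k : ℕ} (hk : k < d) (v : Fin d → ℝ) :
    ∑ j ∈ Finset.univ.filter (fun j : Fin d => (j : ℕ) < k + 1), v j
      = (∑ j ∈ Finset.univ.filter (fun j : Fin d => (j : ℕ) < k), v j) + v ⟨k, hk⟩ := by
  have hins : Finset.univ.filter (fun j : Fin d => (j : ℕ) < k + 1)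
      = insert ⟨k, hk⟩ (Finset.univ.filter (fun j : Fin d => (j : ℕ) < k)) := by
    ext j
    simp only [Finset.mem_filter, Finset.mem_insert, Finset.mem_univ, true_and]
    constructor
    · intro h
      rcases Nat.lt_succ_iff_lt_or_eq.1 h with h' | h'
      · exact Or.inr h'
      · exact Or.inl (Fin.ext h')
    · rintro (rfl | h)
      · exact Nat.lt_succ_self k
      · exact Nat.lt_succ_of_lt h
  rw [hins, Finset.sum_insert (by simp)]
  ring

lemma main_aux {d : ℕ} (v : Fin d → ℝ) (hvnn : ∀ i, 0 ≤ v i)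
    (hmono : ∀ i j : Fin d, i ≤ j → v i ≤ v j)
    (lam : ℝ) (hlam : 0 < lam) (n : ℕ)
    (hn1 : 1 ≤ n) (hnd : n ≤ d)
    (hvz : ∀ i : Fin d, v i ≠ 0 ↔ d - n ≤ (i : ℕ))
    (k : ℕ)
    (hk : k = sSup {i : ℕ | 1 ≤ i ∧ i ≤ d ∧ ∃ h : i - 1 < d,
        (1 - ((d : ℝ) - i) * lam) * v ⟨i - 1, h⟩ ≤
          lam * ∑ j ∈ Finset.univ.filter (fun j : Fin d => (j : ℕ) < i), v j})
    (γs : ℝ)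
    (hγs : γs = (((d : ℝ) - k) * lam - 1) /
      ∑ j ∈ Finset.univ.filter (fun j : Fin d => (j : ℕ) < k), v j)
    (hlam1 : 1 / (n : ℝ) ≤ lam) :
    γs < 0 ∧
    ∀ γ : ℝ, γ < 0 →
      1 + Real.log (-γ) + ∑ i : Fin d, lam * hr (γ * v i / lam)
        ≤ 1 + Real.log (-γs) + ∑ i : Fin d, lam * hr (γs * v i / lam) := by
  have hnR : (0:ℝ) < (n:ℝ) := by exact_mod_cast hn1
  have hnlam : 1 ≤ (n:ℝ) * lam := by
    rw [div_le_iff₀ hnR] at hlam1; linarith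
  set SS : Set ℕ := {i : ℕ | 1 ≤ i ∧ i ≤ d ∧ ∃ h : i - 1 < d,
      (1 - ((d : ℝ) - i) * lam) * v ⟨i - 1, h⟩ ≤
        lam * ∑ j ∈ Finset.univ.filter (fun j : Fin d => (j : ℕ) < i), v j} with hSS
  have hbdd : BddAbove SS := ⟨d, fun x hx => hx.2.1⟩
  have hdn : d - n < d := by omega
  have hvdn : 0 < v ⟨d - n, hdn⟩ :=
    lt_of_le_of_ne (hvnn _) (Ne.symm ((hvz _).2 (by simp)))
  have hvzero : ∀ j : Fin d, (j : ℕ) < d - n → v j = 0 := by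
    intro j hj
    by_contra h'
    have := (hvz j).1 h'
    omega
  have hmem1 : d - n + 1 ∈ SS := by
    refine ⟨by omega, by omega, by omega, ?_⟩
    have hidx : (⟨d - n + 1 - 1, by omega⟩ : Fin d) = ⟨d - n, hdn⟩ := by
      apply Fin.ext; simp
    rw [hidx]
    have hPeq : ∑ j ∈ Finset.univ.filter (fun j : Fin d => (j : ℕ) < d - n + 1), v j
        = v ⟨d - n, hdn⟩ := by
      refine Finset.sum_eq_single_of_mem (⟨d - n, hdn⟩ : Fin d)
        (Finset.mem_filter.2 ⟨Finset.mem_univ _, by show d - n < d - n + 1; omega⟩) ?_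
      intro j hj hne
      simp only [Finset.mem_filter] at hj
      apply hvzero
      have : (j : ℕ) ≠ d - n := fun h => hne (Fin.ext h)
      omega
    rw [hPeq]
    have hcast : ((d - n + 1 : ℕ) : ℝ) = (d : ℝ) - n + 1 := by
      push_cast [hnd]; ring
    rw [hcast]
    nlinarith [hvdn.le]
  have hkmem : k ∈ SS := hk ▸ Nat.sSup_mem ⟨_, hmem1⟩ hbdd
  obtain ⟨hk1, hkd, hkd', hcondk⟩ := hkmem
  have hki : d - n + 1 ≤ k := hk ▸ le_csSup hbdd hmem1
  set Pk : ℝ := ∑ j ∈ Finset.univ.filter (fun j : Fin d => (j : ℕ) < k), v j with hPkdef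
  have hPk_pos : 0 < Pk := by
    have hmem : (⟨d - n, hdn⟩ : Fin d) ∈
        Finset.univ.filter (fun j : Fin d => (j : ℕ) < k) := by
      simp only [Finset.mem_filter, Finset.mem_univ, true_and]; omega
    exact lt_of_lt_of_le hvdn (Finset.single_le_sum (fun j _ => hvnn j) hmem)
  have hnotmem : k + 1 ∉ SS := by
    intro hmem
    have := le_csSup hbdd hmem
    omega
  have hdklt : ((d : ℝ) - k) * lam < 1 := by
    by_contra h'
    push_neg at h'
    have hkdlt : k < d := by
      rcases lt_or_eq_of_le hkd with h | h
      · exact h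
      · exfalso; rw [h] at h'; simp at h'; linarith
    apply hnotmem
    refine ⟨by omega, by omega, by omega, ?_⟩
    have hidx : (⟨k + 1 - 1, by omega⟩ : Fin d) = ⟨k, hkdlt⟩ := by
      apply Fin.ext; simp
    rw [hidx, sum_filter_lt_succ hkdlt]
    have hcast : ((k + 1 : ℕ) : ℝ) = (k : ℝ) + 1 := by push_cast; ring
    rw [hcast]
    nlinarith [hvnn ⟨k, hkdlt⟩, hPk_pos]
  have hγsneg : γs < 0 := by
    rw [hγs]
    exact div_neg_of_neg_of_pos (by linarith) hPk_pos
  have hγsP : γs * Pk = ((d : ℝ) - k) * lam - 1 := by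
    rw [hγs]; field_simp
  refine ⟨hγsneg, ?_⟩
  -- regime facts
  have hregA : ∀ i : Fin d, (i : ℕ) < k → -lam ≤ γs * v i := by
    have hA0 : -lam ≤ γs * v ⟨k - 1, hkd'⟩ := by
      rw [hγs, div_mul_eq_mul_div, le_div_iff₀ hPk_pos]
      nlinarith [hcondk]
    intro i hi
    have hle : v i ≤ v ⟨k - 1, hkd'⟩ := hmono _ _ (by
      rw [Fin.le_def]; simp; omega)
    have := mul_le_mul_of_nonpos_left hle hγsneg.le
    linarith
  have hregB : ∀ i : Fin d, k ≤ (i : ℕ) → γs * v i < -lam ∧ 0 < v i := by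
    intro i hi
    have hkdlt : k < d := lt_of_le_of_lt hi i.isLt
    have hvi : 0 < v i :=
      lt_of_le_of_ne (hvnn _) (Ne.symm ((hvz _).2 (by omega)))
    have hB0 : γs * v ⟨k, hkdlt⟩ < -lam := by
      have hfail : (k + 1) ∉ SS := hnotmem
      rw [hSS, Set.mem_setOf_eq] at hfail
      push_neg at hfail
      have hfail2 := hfail (by omega) (by omega) (by omega)
      have hidx : (⟨k + 1 - 1, by omega⟩ : Fin d) = ⟨k, hkdlt⟩ := by
        apply Fin.ext; simp
      rw [hidx, sum_filter_lt_succ hkdlt] at hfail2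
      push_cast at hfail2
      rw [hγs, div_mul_eq_mul_div, div_lt_iff₀ hPk_pos]
      nlinarith [hfail2]
    refine ⟨?_, hvi⟩
    have hle : v ⟨k, hkdlt⟩ ≤ v i := hmono _ _ (by rw [Fin.le_def]; simpa)
    have := mul_le_mul_of_nonpos_left hle hγsneg.le
    linarith
  -- counting
  have hcount : ((Finset.univ.filter fun i : Fin d => ¬ ((i : ℕ) < k)).card : ℝ)
      = (d : ℝ) - k := by
    have h1 := card_filter_lt_fin (d := d) hkd
    have h2 := Finset.card_filter_add_card_filter_not
      (s := (Finset.univ : Finset (Fin d))) (p := fun i : Fin d => (i : ℕ) < k)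
    simp only [Finset.card_univ, Fintype.card_fin] at h2
    have : (Finset.univ.filter fun i : Fin d => ¬ ((i : ℕ) < k)).card = d - k := by omega
    rw [this]
    push_cast [hkd]; ring
  intro γ hγ
  set A := Real.log (-γ) with hA
  set As := Real.log (-γs) with hAs
  set C : ℝ := ∑ i ∈ Finset.univ.filter (fun i : Fin d => ¬ ((i : ℕ) < k)),
      (-lam * (1 + Real.log (v i / lam))) with hC
  -- split LHS sum
  rw [← Finset.sum_filter_add_sum_filter_not Finset.univ (fun i : Fin d => (i : ℕ) < k)
    (fun i => lam * hr (γ * v i / lam)),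
    ← Finset.sum_filter_add_sum_filter_not Finset.univ (fun i : Fin d => (i : ℕ) < k)
    (fun i => lam * hr (γs * v i / lam))]
  -- RHS values
  have hRHS1 : ∑ i ∈ Finset.univ.filter (fun i : Fin d => (i : ℕ) < k),
      lam * hr (γs * v i / lam) = γs * Pk := by
    rw [Finset.mul_sum]
    apply Finset.sum_congr rfl
    intro i hi
    simp only [Finset.mem_filter] at hi
    exact hr_lin_eq hlam (hregA i hi.2)
  have hRHS2 : ∑ i ∈ Finset.univ.filter (fun i : Fin d => ¬ ((i : ℕ) < k)),
      lam * hr (γs * v i / lam) = C - ((d : ℝ) - k) * lam * As := by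
    have hterm : ∀ i ∈ Finset.univ.filter (fun i : Fin d => ¬ ((i : ℕ) < k)),
        lam * hr (γs * v i / lam)
          = -lam * (1 + Real.log (v i / lam)) - lam * As := by
      intro i hi
      simp only [Finset.mem_filter, not_lt] at hi
      exact hr_log_eq hlam hγsneg (hregB i hi.2).2 (hregB i hi.2).1
    rw [Finset.sum_congr rfl hterm, Finset.sum_sub_distrib, Finset.sum_const,
      nsmul_eq_mul, ← hC]
    rw [hcount]
    ring
  have hLHS1 : ∑ i ∈ Finset.univ.filter (fun i : Fin d => (i : ℕ) < k),
      lam * hr (γ * v i / lam) ≤ γs * Pk * (1 + A - As) := by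
    calc ∑ i ∈ Finset.univ.filter (fun i : Fin d => (i : ℕ) < k),
        lam * hr (γ * v i / lam)
        ≤ ∑ i ∈ Finset.univ.filter (fun i : Fin d => (i : ℕ) < k),
            γs * v i * (1 + A - As) := by
          apply Finset.sum_le_sum
          intro i hi
          simp only [Finset.mem_filter] at hi
          exact hr_le_lin (hvnn i) hlam hγ hγsneg (hregA i hi.2)
      _ = γs * Pk * (1 + A - As) := by
          rw [← Finset.sum_mul, ← Finset.mul_sum]
  have hLHS2 : ∑ i ∈ Finset.univ.filter (fun i : Fin d => ¬ ((i : ℕ) < k)),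
      lam * hr (γ * v i / lam) ≤ C - ((d : ℝ) - k) * lam * A := by
    calc ∑ i ∈ Finset.univ.filter (fun i : Fin d => ¬ ((i : ℕ) < k)),
        lam * hr (γ * v i / lam)
        ≤ ∑ i ∈ Finset.univ.filter (fun i : Fin d => ¬ ((i : ℕ) < k)),
            (-lam * (1 + Real.log (v i / lam)) - lam * A) := by
          apply Finset.sum_le_sum
          intro i hi
          simp only [Finset.mem_filter, not_lt] at hi
          exact hr_le_log (hregB i hi.2).2 hlam hγ
      _ = C - ((d : ℝ) - k) * lam * A := by
          rw [Finset.sum_sub_distrib, Finset.sum_const, nsmul_eq_mul, ← hC, hcount]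
          ring
  rw [hRHS1, hRHS2]
  have key : γs * Pk * (1 + A - As) + (C - ((d : ℝ) - k) * lam * A) + A
      = γs * Pk + (C - ((d : ℝ) - k) * lam * As) + As := by
    linear_combination (A - As) * hγsP
  linarith [hLHS1, hLHS2]

lemma part2_aux {d : ℕ} (θ zhat : Fin d → ℝ) (hθnn : ∀ i, 0 ≤ θ i) (hz : ∀ i, 0 < zhat i)
    (lam : ℝ) (hlam : 0 < lam)
    (hn1 : 1 ≤ (Finset.univ.filter fun i : Fin d => θ i ≠ 0).card)
    (hlam2 : ((Finset.univ.filter fun i : Fin d => θ i ≠ 0).card : ℝ) * lam < 1) :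
    (⨆ γ ∈ Iio (0 : ℝ), portfolioObj θ zhat lam γ) = (⊤ : EReal) := by
  classical
  set T := Finset.univ.filter fun i : Fin d => θ i ≠ 0 with hT
  set n := T.card with hn
  have hTne : T.Nonempty := Finset.card_pos.1 hn1
  have hnn : ∀ i, 0 ≤ θ i * zhat i := fun i => mul_nonneg (hθnn i) (hz i).le
  have hupos : ∀ i ∈ T, 0 < θ i * zhat i := by
    intro i hi
    rw [hT, Finset.mem_filter] at hi
    exact mul_pos (lt_of_le_of_ne (hθnn i) (Ne.symm hi.2)) (hz i)
  have hcoef : (0:ℝ) < 1 - (n : ℝ) * lam := by linarith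
  rw [EReal.eq_top_iff_forall_lt]
  intro M
  set C : ℝ := (n : ℝ) * lam + lam * ∑ i ∈ T, Real.log ((θ i * zhat i) / lam) with hC
  set t : ℝ := max ((M + C) / (1 - (n : ℝ) * lam))
      (1 + T.sup' hTne fun i => Real.log (lam / (θ i * zhat i))) with ht
  set γ0 : ℝ := -Real.exp t with hγ0
  have hγ0neg : γ0 < 0 := by rw [hγ0]; simp [Real.exp_pos]
  have hlog : Real.log (-γ0) = t := by rw [hγ0]; simp [Real.log_exp]
  -- each nonzero term is in the log regime
  have hreg : ∀ i ∈ T, γ0 * (θ i * zhat i) < -lam := by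
    intro i hi
    have hu := hupos i hi
    have h1 : Real.log (lam / (θ i * zhat i)) < t := by
      calc Real.log (lam / (θ i * zhat i))
          ≤ T.sup' hTne fun i => Real.log (lam / (θ i * zhat i)) :=
            Finset.le_sup' (fun i => Real.log (lam / (θ i * zhat i))) hi
        _ < 1 + T.sup' hTne fun i => Real.log (lam / (θ i * zhat i)) := by linarith
        _ ≤ t := le_max_right _ _
    have h2 : lam / (θ i * zhat i) < Real.exp t := by
      calc lam / (θ i * zhat i) = Real.exp (Real.log (lam / (θ i * zhat i))) :=
            (Real.exp_log (div_pos hlam hu)).symm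
        _ < Real.exp t := Real.exp_lt_exp.2 h1
    rw [div_lt_iff₀ hu] at h2
    rw [hγ0]
    nlinarith
  -- value of the objective at γ0
  have hval : portfolioObj θ zhat lam γ0
      = ((1 + (1 - (n : ℝ) * lam) * t - C : ℝ) : EReal) := by
    rw [obj_eq θ zhat lam γ0 hγ0neg.le hlam hnn]
    congr 1
    have hsplit := Finset.sum_filter_add_sum_filter_not Finset.univ
      (fun i : Fin d => θ i ≠ 0) (fun i => lam * hr (γ0 * (θ i * zhat i) / lam))
    have hzero : ∑ i ∈ Finset.univ.filter (fun i : Fin d => ¬ θ i ≠ 0),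
        lam * hr (γ0 * (θ i * zhat i) / lam) = 0 := by
      apply Finset.sum_eq_zero
      intro i hi
      simp only [Finset.mem_filter, not_not] at hi
      rw [hi.2]
      simp [hr, not_lt.2 (by norm_num : (-1:ℝ) ≤ 0)]
    have hmain : ∑ i ∈ T, lam * hr (γ0 * (θ i * zhat i) / lam)
        = -C - (n : ℝ) * lam * t := by
      have hterm : ∀ i ∈ T, lam * hr (γ0 * (θ i * zhat i) / lam)
          = -lam * (1 + Real.log ((θ i * zhat i) / lam)) - lam * t := by
        intro i hi
        rw [hr_log_eq hlam hγ0neg (hupos i hi) (hreg i hi), hlog]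
      rw [Finset.sum_congr rfl hterm, Finset.sum_sub_distrib, Finset.sum_const,
        nsmul_eq_mul, ← hn]
      have : ∑ i ∈ T, -lam * (1 + Real.log ((θ i * zhat i) / lam))
          = -(n:ℝ) * lam - lam * ∑ i ∈ T, Real.log ((θ i * zhat i) / lam) := by
        rw [Finset.sum_congr rfl (fun i _ => by ring :
          ∀ i ∈ T, -lam * (1 + Real.log ((θ i * zhat i) / lam))
            = -lam + (-lam) * Real.log ((θ i * zhat i) / lam)),
          Finset.sum_add_distrib, Finset.sum_const, nsmul_eq_mul, ← hn,
          ← Finset.mul_sum]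
        ring
      rw [this, hC]
      ring
    rw [← hsplit, hmain, hzero, hlog]
    ring
  -- conclude
  have hMlt : M < 1 + (1 - (n : ℝ) * lam) * t - C := by
    have h1 : (M + C) / (1 - (n : ℝ) * lam) ≤ t := le_max_left _ _
    rw [div_le_iff₀ hcoef] at h1
    nlinarith
  calc (M : EReal) < ((1 + (1 - (n : ℝ) * lam) * t - C : ℝ) : EReal) := by
        exact_mod_cast hMlt
    _ = portfolioObj θ zhat lam γ0 := hval.symm
    _ ≤ ⨆ γ ∈ Iio (0 : ℝ), portfolioObj θ zhat lam γ :=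
        le_iSup₂ (f := fun γ (_ : γ ∈ Iio (0:ℝ)) => portfolioObj θ zhat lam γ) γ0 hγ0neg

/-- **Closed-form solution of the `c`-transform evaluation problem by sorting.**
For a portfolio `θ` in the simplex, `λ > 0` and strictly positive returns `ẑ`, with
`u_i = θ_i ẑ_i` sorted increasingly by a permutation `σ`, the critical index `k` and the
point `γ* = ((d − k)λ − 1)/Σ_{i∈[k]} u_{σ(i)}`: if `λ ≥ 1/‖θ‖₀` then `γ*` maximizes
`φ` over `(−∞, 0)`, and if `λ < 1/‖θ‖₀` then `sup_{γ<0} φ(γ) = +∞`. -/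
theorem portfolio_c_transform {d : ℕ} (hd : 0 < d)
    (θ : Fin d → ℝ) (hθnn : ∀ i, 0 ≤ θ i) (hθsum : ∑ i, θ i = 1)
    (zhat : Fin d → ℝ) (hz : ∀ i, 0 < zhat i)
    (lam : ℝ) (hlam : 0 < lam)
    (σ : Equiv.Perm (Fin d))
    (hσ : ∀ i j : Fin d, i ≤ j → θ (σ i) * zhat (σ i) ≤ θ (σ j) * zhat (σ j))
    (k : ℕ)
    (hk : k = sSup {i : ℕ | 1 ≤ i ∧ i ≤ d ∧ ∃ h : i - 1 < d,
      (1 - ((d : ℝ) - i) * lam) * (θ (σ ⟨i - 1, h⟩) * zhat (σ ⟨i - 1, h⟩)) ≤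
        lam * ∑ j ∈ Finset.univ.filter (fun j : Fin d => (j : ℕ) < i),
          θ (σ j) * zhat (σ j)})
    (γs : ℝ)
    (hγs : γs = (((d : ℝ) - k) * lam - 1) /
      ∑ j ∈ Finset.univ.filter (fun j : Fin d => (j : ℕ) < k), θ (σ j) * zhat (σ j)) :
    ((1 : ℝ) / ((Finset.univ.filter fun i : Fin d => θ i ≠ 0).card : ℝ) ≤ lam →
      γs < 0 ∧ ∀ γ : ℝ, γ < 0 → portfolioObj θ zhat lam γ ≤ portfolioObj θ zhat lam γs) ∧
    (lam < (1 : ℝ) / ((Finset.univ.filter fun i : Fin d => θ i ≠ 0).card : ℝ) →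
      (⨆ γ ∈ Iio (0 : ℝ), portfolioObj θ zhat lam γ) = (⊤ : EReal)) := by
  classical
  have hnn : ∀ i, 0 ≤ θ i * zhat i := fun i => mul_nonneg (hθnn i) (hz i).le
  set n := (Finset.univ.filter fun i : Fin d => θ i ≠ 0).card with hn
  have hex : ∃ i, θ i ≠ 0 := by
    by_contra h
    push_neg at h
    rw [Finset.sum_congr rfl (fun i _ => h i)] at hθsum
    simp at hθsum
  have hn1 : 1 ≤ n := Finset.card_pos.2
    ⟨hex.choose, Finset.mem_filter.2 ⟨Finset.mem_univ _, hex.choose_spec⟩⟩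
  have hnd : n ≤ d := by
    rw [hn]
    calc (Finset.univ.filter fun i : Fin d => θ i ≠ 0).card
        ≤ (Finset.univ : Finset (Fin d)).card := Finset.card_filter_le _ _
      _ = d := by simp
  have hvz : ∀ i : Fin d, θ (σ i) * zhat (σ i) ≠ 0 ↔ d - n ≤ (i : ℕ) := by
    set S := Finset.univ.filter fun i : Fin d => θ (σ i) * zhat (σ i) ≠ 0 with hS
    have hScard : S.card = n := by
      rw [hn]
      apply Finset.card_bij (fun (i : Fin d) _ => σ i)
      · intro a ha
        rw [hS, Finset.mem_filter] at ha
        refine Finset.mem_filter.2 ⟨Finset.mem_univ _, ?_⟩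
        intro h0
        exact ha.2 (by rw [h0]; ring)
      · intro a _ b _ hab
        exact σ.injective hab
      · intro b hb
        refine ⟨σ.symm b, ?_, by simp⟩
        rw [Finset.mem_filter] at hb
        rw [hS, Finset.mem_filter]
        refine ⟨Finset.mem_univ _, ?_⟩
        rw [Equiv.apply_symm_apply]
        exact mul_ne_zero hb.2 (ne_of_gt (hz b))
    intro i
    constructor
    · intro hvi
      by_contra hlt
      push_neg at hlt
      have hsub : Finset.Ici i ⊆ S := by
        intro j hj
        rw [Finset.mem_Ici] at hj
        rw [hS, Finset.mem_filter]
        refine ⟨Finset.mem_univ _, ?_⟩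
        have h1 := hσ i j hj
        have h2 : 0 < θ (σ i) * zhat (σ i) := lt_of_le_of_ne (hnn (σ i)) (Ne.symm hvi)
        exact ne_of_gt (lt_of_lt_of_le h2 h1)
      have hcard := Finset.card_le_card hsub
      rw [Fin.card_Ici, hScard] at hcard
      omega
    · intro hge
      by_contra hvi
      have hsub : S ⊆ Finset.Ioi i := by
        intro j hj
        rw [hS, Finset.mem_filter] at hj
        rw [Finset.mem_Ioi]
        by_contra hji
        push_neg at hji
        have h1 := hσ j i hji
        have h2 : θ (σ j) * zhat (σ j) ≤ 0 := hvi ▸ h1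
        exact hj.2 (le_antisymm h2 (hnn (σ j)))
      have hcard := Finset.card_le_card hsub
      rw [Fin.card_Ioi, hScard] at hcard
      have := i.isLt
      omega
  constructor
  · intro hlam1
    have hres := main_aux (fun i => θ (σ i) * zhat (σ i)) (fun i => hnn (σ i))
      (fun i j hij => hσ i j hij) lam hlam n hn1 hnd hvz k hk γs hγs hlam1
    refine ⟨hres.1, ?_⟩
    intro γ hγ
    rw [obj_eq θ zhat lam γ hγ.le hlam hnn, obj_eq θ zhat lam γs hres.1.le hlam hnn,
      EReal.coe_le_coe_iff]
    have hre : ∀ δ : ℝ, ∑ i : Fin d, lam * hr (δ * (θ i * zhat i) / lam)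
        = ∑ i : Fin d, lam * hr (δ * (θ (σ i) * zhat (σ i)) / lam) :=
      fun δ => (Equiv.sum_comp σ (fun i => lam * hr (δ * (θ i * zhat i) / lam))).symm
    rw [hre γ, hre γs]
    exact hres.2 γ hγ
  · intro hlam2
    apply part2_aux θ zhat hθnn hz lam hlam hn1
    have hnR : (0:ℝ) < (n:ℝ) := by exact_mod_cast hn1
    rw [lt_div_iff₀ hnR] at hlam2
    linarith [mul_comm lam (n:ℝ)]
end
end
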